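/- (Theorem 4, η-coordinates) For every η ∈ U and all x, y, z ∈ S⁺, the Riemannian connection coefficient Γ_{xyz}(η) = (1/2)(∂g_{yz}(η)/∂η(x) + ∂g_{xz}(η)/∂η(y) − ∂g_{xy}(η)/∂η(z)), where g_{xy}(η) = ∂²φ(η)/∂η(x)∂η(y), satisfies Γ_{xyz}(η) = −(1/2) Σ_{s∈S} μ(s,x) μ(s,y) μ(s,z) p_η(s)^{-2}. -/

import Mathlib

local instance {S : Type*} [PartialOrder S] [DecidableEq S]
    [DecidableRel ((· ≤ ·) : S → S → Prop)] :
    DecidableRel ((· < ·) : S → S → Prop) :=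
  fun a b => decidable_of_iff (a ≤ b ∧ a ≠ b) lt_iff_le_and_ne.symm

/-- The extension of `η : ℝ^{S⁺}` to `S` with `η(⊥) = 1`. -/
noncomputable def etaBar {S : Type*} [PartialOrder S] [OrderBot S] [DecidableEq S]
    (η : {x : S // x ≠ ⊥} → ℝ) (s : S) : ℝ :=
  if h : s = ⊥ then 1 else η ⟨s, h⟩

/-- `p_η(x) = Σ_{s ≥ x} μ(x,s) η(s)`, where `η(⊥) = 1`. -/
noncomputable def pEta {S : Type*} [Fintype S] [PartialOrder S] [OrderBot S] [DecidableEq S]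
    [DecidableRel ((· ≤ ·) : S → S → Prop)]
    (mu : S → S → ℤ) (η : {x : S // x ≠ ⊥} → ℝ) (x : S) : ℝ :=
  ∑ s ∈ Finset.univ.filter (fun s => x ≤ s), (mu x s : ℝ) * etaBar η s

/-- `φ(η) = Σ_{x∈S} p_η(x) log p_η(x)`. -/
noncomputable def phi {S : Type*} [Fintype S] [PartialOrder S] [OrderBot S] [DecidableEq S]
    [DecidableRel ((· ≤ ·) : S → S → Prop)]
    (mu : S → S → ℤ) (η : {x : S // x ≠ ⊥} → ℝ) : ℝ :=
  ∑ x : S, pEta mu η x * Real.log (pEta mu η x)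

/-- Partial derivative of a function `f : ℝ^{S⁺} → ℝ` with respect to the coordinate `x`. -/
noncomputable def pd {S : Type*} [Fintype S] [PartialOrder S] [OrderBot S] [DecidableEq S]
    (f : ({x : S // x ≠ ⊥} → ℝ) → ℝ) (x : {x : S // x ≠ ⊥})
    (η : {x : S // x ≠ ⊥} → ℝ) : ℝ :=
  deriv (fun t => f (Function.update η x t)) (η x)

section helpers
variable {S : Type*} [Fintype S] [PartialOrder S] [OrderBot S] [DecidableEq S]
    [DecidableRel ((· ≤ ·) : S → S → Prop)] (mu : S → S → ℤ)

lemma etaBar_update (η : {x : S // x ≠ ⊥} → ℝ) (v : {x : S // x ≠ ⊥}) (t : ℝ) (w : S) :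
    etaBar (Function.update η v t) w = etaBar η w + (if w = ↑v then t - η v else 0) := by
  unfold etaBar
  by_cases h : w = ⊥
  · subst h
    have hv : ¬ (⊥ : S) = ↑v := fun hc => v.2 hc.symm
    simp [hv]
  · simp only [h, dite_false]
    rw [Function.update_apply]
    by_cases h2 : w = ↑v
    · have : (⟨w, h⟩ : {x : S // x ≠ ⊥}) = v := Subtype.ext h2
      simp [this, h2]
    · have : (⟨w, h⟩ : {x : S // x ≠ ⊥}) ≠ v := fun hc => h2 (congrArg Subtype.val hc)
      simp [this, h2]

lemma pEta_update (hmu_nle : ∀ x y : S, ¬ x ≤ y → mu x y = 0)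
    (η : {x : S // x ≠ ⊥} → ℝ) (v : {x : S // x ≠ ⊥}) (t : ℝ) (s : S) :
    pEta mu (Function.update η v t) s = pEta mu η s + (mu s ↑v : ℝ) * (t - η v) := by
  unfold pEta
  simp only [etaBar_update, mul_add, Finset.sum_add_distrib]
  congr 1
  rw [Finset.sum_congr rfl (fun w _ => by rw [mul_ite, mul_zero])]
  rw [Finset.sum_ite_eq']
  by_cases hv : s ≤ ↑v
  · simp [hv]
  · simp [hv, hmu_nle s ↑v hv]

lemma hasDerivAt_pEta_update (hmu_nle : ∀ x y : S, ¬ x ≤ y → mu x y = 0) (η : {x : S // x ≠ ⊥} → ℝ) (v : {x : S // x ≠ ⊥}) (s : S)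
    (t0 : ℝ) :
    HasDerivAt (fun t => pEta mu (Function.update η v t) s) (mu s ↑v : ℝ) t0 := by
  have h : (fun t => pEta mu (Function.update η v t) s)
      = fun t => (mu s ↑v : ℝ) * t + (pEta mu η s - (mu s ↑v : ℝ) * η v) := by
    funext t; rw [pEta_update mu hmu_nle]; ring
  rw [h]
  simpa using ((hasDerivAt_id t0).const_mul (mu s ↑v : ℝ)).add_const (pEta mu η s - (mu s ↑v : ℝ) * η v)

lemma continuous_pEta (s : S) : Continuous (fun η : {x : S // x ≠ ⊥} → ℝ => pEta mu η s) := by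
  unfold pEta
  refine continuous_finset_sum _ (fun w _ => Continuous.mul continuous_const ?_)
  unfold etaBar
  by_cases h : w = ⊥
  · simp only [h, dite_true]; exact continuous_const
  · simp only [h, dite_false]; exact continuous_apply _

lemma isOpen_posSet :
    IsOpen {η : {x : S // x ≠ ⊥} → ℝ | ∀ s : S, 0 < pEta mu η s} := by
  have : {η : {x : S // x ≠ ⊥} → ℝ | ∀ s : S, 0 < pEta mu η s}
      = ⋂ s : S, (fun η => pEta mu η s) ⁻¹' Set.Ioi 0 := by
    ext η; simp [Set.mem_iInter]
  rw [this]
  exact isOpen_iInter_of_finite fun s => (isOpen_Ioi).preimage (continuous_pEta mu s)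

/-- the first derivative candidate -/
noncomputable def g1 (v : {x : S // x ≠ ⊥}) (η : {x : S // x ≠ ⊥} → ℝ) : ℝ :=
  ∑ s : S, (mu s ↑v : ℝ) * (Real.log (pEta mu η s) + 1)

/-- the second derivative candidate -/
noncomputable def g2 (v w : {x : S // x ≠ ⊥}) (η : {x : S // x ≠ ⊥} → ℝ) : ℝ :=
  ∑ s : S, (mu s ↑v : ℝ) * (mu s ↑w : ℝ) * (pEta mu η s)⁻¹

lemma hasDerivAt_phi (hmu_nle : ∀ x y : S, ¬ x ≤ y → mu x y = 0) (η : {x : S // x ≠ ⊥} → ℝ) (hη : ∀ s : S, 0 < pEta mu η s)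
    (v : {x : S // x ≠ ⊥}) :
    HasDerivAt (fun t => phi mu (Function.update η v t)) (g1 mu v η) (η v) := by
  unfold phi g1
  refine HasDerivAt.fun_sum fun s _ => ?_
  have hP := hasDerivAt_pEta_update mu hmu_nle η v s (η v)
  have hval : pEta mu (Function.update η v (η v)) s = pEta mu η s := by
    rw [Function.update_eq_self]
  have hne : pEta mu (Function.update η v (η v)) s ≠ 0 := by rw [hval]; exact (hη s).ne'
  have := hP.mul (hP.log hne)
  convert this using 1
  · rfl
  · rfl
  rw [hval]
  have hp : pEta mu η s ≠ 0 := (hη s).ne'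
  field_simp

lemma hasDerivAt_g1 (hmu_nle : ∀ x y : S, ¬ x ≤ y → mu x y = 0) (η : {x : S // x ≠ ⊥} → ℝ) (hη : ∀ s : S, 0 < pEta mu η s)
    (v w : {x : S // x ≠ ⊥}) :
    HasDerivAt (fun t => g1 mu v (Function.update η w t)) (g2 mu v w η) (η w) := by
  unfold g1 g2
  refine HasDerivAt.fun_sum fun s _ => ?_
  have hP := hasDerivAt_pEta_update mu hmu_nle η w s (η w)
  have hval : pEta mu (Function.update η w (η w)) s = pEta mu η s := by
    rw [Function.update_eq_self]
  have hne : pEta mu (Function.update η w (η w)) s ≠ 0 := by rw [hval]; exact (hη s).ne'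
  have := (((hP.log hne).add_const 1).const_mul (mu s ↑v : ℝ))
  convert this using 1
  · rfl
  rw [hval]
  have hp : pEta mu η s ≠ 0 := (hη s).ne'
  field_simp

lemma hasDerivAt_g2 (hmu_nle : ∀ x y : S, ¬ x ≤ y → mu x y = 0) (η : {x : S // x ≠ ⊥} → ℝ) (hη : ∀ s : S, 0 < pEta mu η s)
    (v w u : {x : S // x ≠ ⊥}) :
    HasDerivAt (fun t => g2 mu v w (Function.update η u t))
      (-∑ s : S, (mu s ↑u : ℝ) * (mu s ↑v : ℝ) * (mu s ↑w : ℝ) * (pEta mu η s ^ 2)⁻¹)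
      (η u) := by
  unfold g2
  rw [← Finset.sum_neg_distrib]
  refine HasDerivAt.fun_sum fun s _ => ?_
  have hP := hasDerivAt_pEta_update mu hmu_nle η u s (η u)
  have hval : pEta mu (Function.update η u (η u)) s = pEta mu η s := by
    rw [Function.update_eq_self]
  have hne : pEta mu (Function.update η u (η u)) s ≠ 0 := by rw [hval]; exact (hη s).ne'
  have := (hP.inv hne).const_mul ((mu s ↑v : ℝ) * (mu s ↑w : ℝ))
  convert this using 1
  · rfl
  · rfl
  rw [hval]
  have hp : pEta mu η s ≠ 0 := (hη s).ne'
  field_simp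

end helpers

section main
variable {S : Type*} [Fintype S] [PartialOrder S] [OrderBot S] [DecidableEq S]
    [DecidableRel ((· ≤ ·) : S → S → Prop)] (mu : S → S → ℤ)

lemma continuous_update_coord (η : {x : S // x ≠ ⊥} → ℝ) (w : {x : S // x ≠ ⊥}) :
    Continuous (fun t : ℝ => Function.update η w t) := by
  refine continuous_pi fun i => ?_
  simp only [Function.update_apply]
  by_cases h : i = w
  · simp only [h, if_true]; exact continuous_id
  · simp only [h, if_false]; exact continuous_const

lemma eventually_update_mem (η : {x : S // x ≠ ⊥} → ℝ) (hη : ∀ s : S, 0 < pEta mu η s)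
    (w : {x : S // x ≠ ⊥}) :
    ∀ᶠ t in nhds (η w), ∀ s : S, 0 < pEta mu (Function.update η w t) s := by
  have hO := isOpen_posSet mu (S := S)
  have hmem : Function.update η w (η w) ∈ {η' : {x : S // x ≠ ⊥} → ℝ | ∀ s, 0 < pEta mu η' s} := by
    rw [Function.update_eq_self]; exact hη
  have := (continuous_update_coord η w).continuousAt (x := η w)
  exact this (hO.mem_nhds hmem)

lemma pd_phi_eq (hmu_nle : ∀ x y : S, ¬ x ≤ y → mu x y = 0)
    (η : {x : S // x ≠ ⊥} → ℝ) (hη : ∀ s : S, 0 < pEta mu η s) (v : {x : S // x ≠ ⊥}) :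
    pd (phi mu) v η = g1 mu v η :=
  (hasDerivAt_phi mu hmu_nle η hη v).deriv

lemma pd_pd_phi_eq (hmu_nle : ∀ x y : S, ¬ x ≤ y → mu x y = 0)
    (η : {x : S // x ≠ ⊥} → ℝ) (hη : ∀ s : S, 0 < pEta mu η s) (v w : {x : S // x ≠ ⊥}) :
    pd (pd (phi mu) v) w η = g2 mu v w η := by
  have hev : (fun t => pd (phi mu) v (Function.update η w t))
      =ᶠ[nhds (η w)] (fun t => g1 mu v (Function.update η w t)) :=
    (eventually_update_mem mu η hη w).mono fun t ht => pd_phi_eq mu hmu_nle _ ht v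
  have h2 : pd (pd (phi mu) v) w η = deriv (fun t => g1 mu v (Function.update η w t)) (η w) :=
    hev.deriv_eq
  rw [h2]
  exact (hasDerivAt_g1 mu hmu_nle η hη v w).deriv

lemma pd3_eq (hmu_nle : ∀ x y : S, ¬ x ≤ y → mu x y = 0)
    (η : {x : S // x ≠ ⊥} → ℝ) (hη : ∀ s : S, 0 < pEta mu η s) (v w u : {x : S // x ≠ ⊥}) :
    pd (pd (pd (phi mu) v) w) u η
      = -∑ s : S, (mu s ↑u : ℝ) * (mu s ↑v : ℝ) * (mu s ↑w : ℝ) * (pEta mu η s ^ 2)⁻¹ := by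
  have hev : (fun t => pd (pd (phi mu) v) w (Function.update η u t))
      =ᶠ[nhds (η u)] (fun t => g2 mu v w (Function.update η u t)) :=
    (eventually_update_mem mu η hη u).mono fun t ht => pd_pd_phi_eq mu hmu_nle _ ht v w
  have h2 : pd (pd (pd (phi mu) v) w) u η
      = deriv (fun t => g2 mu v w (Function.update η u t)) (η u) := hev.deriv_eq
  rw [h2]
  exact (hasDerivAt_g2 mu hmu_nle η hη v w u).deriv

end main

/-- (Theorem 4, η-coordinates) With `g_{xy}(η) = ∂²φ(η)/∂η(x)∂η(y)`, the Riemannian connection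
coefficient `Γ_{xyz}(η) = (1/2)(∂g_{yz}/∂η(x) + ∂g_{xz}/∂η(y) − ∂g_{xy}/∂η(z))` satisfies
`Γ_{xyz}(η) = −(1/2) Σ_{s∈S} μ(s,x) μ(s,y) μ(s,z) p_η(s)⁻²` for every `η ∈ U`. -/
theorem gamma_eta {S : Type*} [Fintype S] [PartialOrder S] [OrderBot S]
    [DecidableEq S] [DecidableRel ((· ≤ ·) : S → S → Prop)]
    (mu : S → S → ℤ)
    (hmu_self : ∀ x : S, mu x x = 1)
    (hmu_lt : ∀ x y : S, x < y →
      mu x y = -∑ s ∈ Finset.univ.filter (fun s => x ≤ s ∧ s < y), mu x s)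
    (hmu_nle : ∀ x y : S, ¬ x ≤ y → mu x y = 0)
    (η : {x : S // x ≠ ⊥} → ℝ) (hU : ∀ s : S, 0 < pEta mu η s) (x y z : {x : S // x ≠ ⊥}) :
    (1 / 2 : ℝ) * (pd (pd (pd (phi mu) z) y) x η + pd (pd (pd (phi mu) z) x) y η
        - pd (pd (pd (phi mu) y) x) z η)
      = -(1 / 2 : ℝ) * ∑ s : S, (mu s (x : S) : ℝ) * (mu s (y : S) : ℝ) * (mu s (z : S) : ℝ)
          * (pEta mu η s ^ 2)⁻¹ := by
  have h1 := pd3_eq mu hmu_nle η hU z y x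
  have h2 := pd3_eq mu hmu_nle η hU z x y
  have h3 := pd3_eq mu hmu_nle η hU y x z
  rw [h1, h2, h3]
  have e1 : (∑ s : S, (mu s ↑x : ℝ) * (mu s ↑z : ℝ) * (mu s ↑y : ℝ) * (pEta mu η s ^ 2)⁻¹)
      = ∑ s : S, (mu s ↑x : ℝ) * (mu s ↑y : ℝ) * (mu s ↑z : ℝ) * (pEta mu η s ^ 2)⁻¹ :=
    Finset.sum_congr rfl fun s _ => by ring
  have e2 : (∑ s : S, (mu s ↑y : ℝ) * (mu s ↑z : ℝ) * (mu s ↑x : ℝ) * (pEta mu η s ^ 2)⁻¹)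
      = ∑ s : S, (mu s ↑x : ℝ) * (mu s ↑y : ℝ) * (mu s ↑z : ℝ) * (pEta mu η s ^ 2)⁻¹ :=
    Finset.sum_congr rfl fun s _ => by ring
  have e3 : (∑ s : S, (mu s ↑z : ℝ) * (mu s ↑y : ℝ) * (mu s ↑x : ℝ) * (pEta mu η s ^ 2)⁻¹)
      = ∑ s : S, (mu s ↑x : ℝ) * (mu s ↑y : ℝ) * (mu s ↑z : ℝ) * (pEta mu η s ^ 2)⁻¹ :=
    Finset.sum_congr rfl fun s _ => by ring
  rw [e1, e2, e3]
  ring
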